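/- For any unary NFAs 𝒜₁ and 𝒜₂, with state sets Q₁ and Q₂ respectively, L(𝒜₁) is not p-equivalent to L(𝒜₂) if and only if there exists n ∈ ℕ such that 2^{|Q₁|+|Q₂|} ≤ n < 2^{1+|Q₁|+|Q₂|} and the string 0ⁿ belongs to L(𝒜₁) △ L(𝒜₂). -/

import Mathlib

open Filter

/-- `mu L n` is the probability that a uniformly random string of length `n` lies in `L`. -/
noncomputable def mu {A : Type*} [Fintype A] (L : Set (List A)) (n : ℕ) : ℝ :=
  (Nat.card {s : List A // s.length = n ∧ s ∈ L} : ℝ) / (Fintype.card A : ℝ) ^ n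

/-- Symmetric difference of two languages. -/
def sdiffL {A : Type*} (L₁ L₂ : Set (List A)) : Set (List A) := (L₁ \ L₂) ∪ (L₂ \ L₁)

/-- `L₁ ≃_p L₂` : the probability of the symmetric difference tends to `0`. -/
def pEquiv {A : Type*} [Fintype A] (L₁ L₂ : Set (List A)) : Prop :=
  Filter.Tendsto (mu (sdiffL L₁ L₂)) Filter.atTop (nhds 0)

lemma list_unit_eq_replicate (s : List Unit) : s = List.replicate s.length () := by
  apply List.eq_replicate_iff.2
  exact ⟨rfl, fun b _ => rfl⟩

open scoped Classical in
lemma mu_unit_eq (L : Set (List Unit)) (n : ℕ) :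
    mu L n = if List.replicate n () ∈ L then 1 else 0 := by
  have hset : {s : List Unit | s.length = n ∧ s ∈ L} =
      if List.replicate n () ∈ L then {List.replicate n ()} else ∅ := by
    split_ifs with h
    · ext s
      simp only [Set.mem_setOf_eq, Set.mem_singleton_iff]
      constructor
      · rintro ⟨hl, _⟩; rw [list_unit_eq_replicate s, hl]
      · rintro rfl; exact ⟨List.length_replicate, h⟩
    · ext s
      simp only [Set.mem_setOf_eq, Set.mem_empty_iff_false, iff_false, not_and]
      intro hl hs
      exact h (by rw [← hl, ← list_unit_eq_replicate s]; exact hs)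
  have hcard : Nat.card {s : List Unit // s.length = n ∧ s ∈ L} =
      if List.replicate n () ∈ L then 1 else 0 := by
    have h0 : {s : List Unit // s.length = n ∧ s ∈ L} =
        {s : List Unit // s ∈ {s : List Unit | s.length = n ∧ s ∈ L}} := rfl
    rw [h0, Nat.card_coe_set_eq, hset]
    split_ifs
    · exact Set.ncard_singleton _
    · exact Set.ncard_empty _
  unfold mu
  rw [hcard]
  simp only [Fintype.card_unit, Nat.cast_one, one_pow, div_one]
  split_ifs <;> norm_num

lemma iterate_period {α : Type*} (g : α → α) (x : α) (i p : ℕ)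
    (h : g^[i + p] x = g^[i] x) :
    ∀ k n, i ≤ n → g^[n + k * p] x = g^[n] x := by
  have base : ∀ n, i ≤ n → g^[n + p] x = g^[n] x := by
    intro n hn
    obtain ⟨m, rfl⟩ := Nat.exists_eq_add_of_le hn
    have h1 : i + m + p = m + (i + p) := by ring
    have h2 : i + m = m + i := by ring
    rw [h1, Function.iterate_add_apply, h, ← Function.iterate_add_apply, h2]
  intro k
  induction k with
  | zero => intro n _; simp
  | succ k ih =>
    intro n hn
    have : n + (k + 1) * p = (n + p) + k * p := by ring
    rw [this, ih (n + p) (le_trans hn (Nat.le_add_right _ _)), base n hn]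

lemma freq_iff_window {α : Type*} [Fintype α] (g : α → α) (x : α) (Q : α → Prop) :
    (∃ᶠ n in atTop, Q (g^[n] x)) ↔
      ∃ n, Fintype.card α ≤ n ∧ n < 2 * Fintype.card α ∧ Q (g^[n] x) := by
  set N := Fintype.card α with hN
  obtain ⟨a, b, hab, heq⟩ := Fintype.exists_ne_map_eq_of_card_lt
    (fun k : Fin (N + 1) => g^[(k : ℕ)] x) (by simp [hN])
  wlog hlt : (a : ℕ) < (b : ℕ) generalizing a b
  · exact this b a hab.symm heq.symm
      (lt_of_le_of_ne (Nat.le_of_not_lt hlt) (fun h => hab (Fin.ext h.symm)))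
  set i := (a : ℕ)
  set p := (b : ℕ) - i with hp
  have hp0 : 0 < p := Nat.sub_pos_of_lt hlt
  have hip : i + p = (b : ℕ) := by omega
  have hiN : i < N := by have := b.is_lt; omega
  have hipN : i + p ≤ N := by have := b.is_lt; omega
  have hper : g^[i + p] x = g^[i] x := by rw [hip]; exact heq.symm
  have key := iterate_period g x i p hper
  constructor
  · intro hfreq
    obtain ⟨n₀, hn₀, hQ⟩ := (frequently_atTop.1 hfreq) N
    set r := (n₀ - N) % p with hr
    set q := (n₀ - N) / p with hq
    have hrp : r < p := Nat.mod_lt _ hp0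
    have hdm : p * q + r = n₀ - N := Nat.div_add_mod (n₀ - N) p
    have hdecomp : n₀ = (N + r) + q * p := by
      have : n₀ = N + (n₀ - N) := by omega
      rw [this, ← hdm]; ring
    refine ⟨N + r, Nat.le_add_right _ _, by omega, ?_⟩
    have := key q (N + r) (by omega)
    rw [← hdecomp] at this
    rwa [← this]
  · rintro ⟨n, hn1, hn2, hQ⟩
    apply frequently_atTop.2
    intro c
    refine ⟨n + c * p, ?_, ?_⟩
    · calc c = c * 1 := (Nat.mul_one c).symm
        _ ≤ c * p := Nat.mul_le_mul_left c hp0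
        _ ≤ n + c * p := Nat.le_add_left _ _
    · rw [key c n (by omega)]; exact hQ

lemma eval_replicate {σ : Type*} (M : NFA Unit σ) (n : ℕ) :
    M.evalFrom M.start (List.replicate n ()) = (fun S => M.stepSet S ())^[n] M.start := by
  induction n with
  | zero => rfl
  | succ n ih =>
    rw [List.replicate_succ', NFA.evalFrom_append, NFA.evalFrom_singleton, ih,
      Function.iterate_succ_apply']

theorem unary_nfa_pEquiv_iff {σ₁ σ₂ : Type*} [Fintype σ₁] [Fintype σ₂]
    (M₁ : NFA Unit σ₁) (M₂ : NFA Unit σ₂) :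
    ¬ pEquiv {s : List Unit | s ∈ M₁.accepts} {s : List Unit | s ∈ M₂.accepts} ↔
      ∃ n : ℕ,
        2 ^ (Fintype.card σ₁ + Fintype.card σ₂) ≤ n ∧
        n < 2 ^ (1 + Fintype.card σ₁ + Fintype.card σ₂) ∧
        List.replicate n () ∈
          sdiffL {s : List Unit | s ∈ M₁.accepts} {s : List Unit | s ∈ M₂.accepts} := by
  set L : Set (List Unit) :=
    sdiffL {s : List Unit | s ∈ M₁.accepts} {s : List Unit | s ∈ M₂.accepts} with hL
  set P : ℕ → Prop := fun n => List.replicate n () ∈ L with hP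
  have step1 : ¬ pEquiv {s : List Unit | s ∈ M₁.accepts} {s : List Unit | s ∈ M₂.accepts}
      ↔ ∃ᶠ n in atTop, P n := by
    unfold pEquiv
    constructor
    · intro hnp
      by_contra hfreq
      apply hnp
      have hev : ∀ᶠ n in atTop, ¬ P n := not_frequently.1 hfreq
      have hmu : ∀ᶠ n in atTop, mu L n = 0 := by
        filter_upwards [hev] with n hn
        rw [mu_unit_eq]
        exact if_neg hn
      exact Tendsto.congr' (hmu.mono fun n h => h.symm) tendsto_const_nhds
    · intro hfreq htend
      have h1 : ∀ᶠ n in atTop, mu L n < 1 := htend.eventually_lt_const (by norm_num)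
      obtain ⟨n, hlt, hPn⟩ := (h1.and_frequently hfreq).exists
      rw [mu_unit_eq] at hlt
      split_ifs at hlt with h
      · exact absurd hlt (lt_irrefl 1)
      · exact h hPn
  rw [step1]
  set g : Set σ₁ × Set σ₂ → Set σ₁ × Set σ₂ :=
    fun S => (M₁.stepSet S.1 (), M₂.stepSet S.2 ()) with hg
  set x0 : Set σ₁ × Set σ₂ := (M₁.start, M₂.start) with hx0
  set Q : Set σ₁ × Set σ₂ → Prop := fun S =>
    ((∃ q ∈ M₁.accept, q ∈ S.1) ∧ ¬ (∃ q ∈ M₂.accept, q ∈ S.2)) ∨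
    ((∃ q ∈ M₂.accept, q ∈ S.2) ∧ ¬ (∃ q ∈ M₁.accept, q ∈ S.1)) with hQ
  have hiter : ∀ n, g^[n] x0 =
      ((fun S => M₁.stepSet S ())^[n] M₁.start, (fun S => M₂.stepSet S ())^[n] M₂.start) := by
    intro n
    induction n with
    | zero => rfl
    | succ n ih =>
      simp only [Function.iterate_succ_apply']
      rw [ih]
  have hPQ : ∀ n, P n ↔ Q (g^[n] x0) := by
    intro n
    rw [hiter n]
    simp only [hP, hQ, hL, sdiffL, Set.mem_union, Set.mem_diff, Set.mem_setOf_eq,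
      NFA.mem_accepts]
    rw [eval_replicate M₁ n, eval_replicate M₂ n]
  have hcard : Fintype.card (Set σ₁ × Set σ₂) =
      2 ^ (Fintype.card σ₁ + Fintype.card σ₂) := by
    rw [Fintype.card_prod, Fintype.card_set, Fintype.card_set, pow_add]
  have hiff := freq_iff_window g x0 Q
  rw [hcard] at hiff
  have hpow : 2 ^ (1 + Fintype.card σ₁ + Fintype.card σ₂) =
      2 * 2 ^ (Fintype.card σ₁ + Fintype.card σ₂) := by
    rw [show 1 + Fintype.card σ₁ + Fintype.card σ₂
        = (Fintype.card σ₁ + Fintype.card σ₂) + 1 by omega, pow_succ, Nat.mul_comm]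
  have goal_eq : (∃ᶠ n in atTop, P n) ↔ (∃ᶠ n in atTop, Q (g^[n] x0)) :=
    frequently_congr (Eventually.of_forall fun n => hPQ n)
  rw [goal_eq, hiff]
  constructor
  · rintro ⟨n, h1, h2, h3⟩
    exact ⟨n, h1, by rw [hpow]; exact h2, (hPQ n).2 h3⟩
  · rintro ⟨n, h1, h2, h3⟩
    exact ⟨n, h1, by rw [hpow] at h2; exact h2, (hPQ n).1 h3⟩
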